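/- Let K > 0 with K ≠ 1, and let A₂ be the 3×3 matrix with rows (K, 1, 1), (1, 1, 1), (1, 1, 1). Define a = (2K + 1 − √(8K + 1)) / (2(K − 1)), b = (−3 + √(8K + 1)) / (4(K − 1)), and c = (4K − 1 − √(8K + 1)) / (8(K − 1)). Then there exist positive real numbers x and y such that, with X = diag(x, y, y), the matrix X·A₂·X equals the matrix with rows (a, b, b), (b, c, c), (b, c, c), and this matrix is doubly stochastic. -/
import Mathlib


open Matrix BigOperators

/-- An `n × n` real matrix is doubly stochastic if all entries are nonnegative and
all row sums and column sums equal `1`. -/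
def IsDoublyStochastic {n : ℕ} (S : Matrix (Fin n) (Fin n) ℝ) : Prop :=
  (∀ i j, 0 ≤ S i j) ∧ (∀ i, ∑ j, S i j = 1) ∧ (∀ j, ∑ i, S i j = 1)

set_option maxHeartbeats 1000000 in
/-- The explicit Sinkhorn limit of the matrix `A₂` with rows `(K,1,1), (1,1,1), (1,1,1)`. -/
theorem sinkhorn_A2 (K : ℝ) (hK : 0 < K) (hK1 : K ≠ 1)
    (a b c : ℝ)
    (ha : a = (2 * K + 1 - Real.sqrt (8 * K + 1)) / (2 * (K - 1)))
    (hb : b = (-3 + Real.sqrt (8 * K + 1)) / (4 * (K - 1)))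
    (hc : c = (4 * K - 1 - Real.sqrt (8 * K + 1)) / (8 * (K - 1))) :
    ∃ x y : ℝ, 0 < x ∧ 0 < y ∧
      Matrix.diagonal ![x, y, y] * !![K, 1, 1; 1, 1, 1; 1, 1, 1] *
          Matrix.diagonal ![x, y, y]
        = !![a, b, b; b, c, c; b, c, c] ∧
      IsDoublyStochastic !![a, b, b; b, c, c; b, c, c] := by
  set s := Real.sqrt (8 * K + 1) with hsdef
  have hs0 : 0 ≤ s := Real.sqrt_nonneg _
  have hs2 : s ^ 2 = 8 * K + 1 := Real.sq_sqrt (by linarith)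
  have hKne : K - 1 ≠ 0 := sub_ne_zero.mpr hK1
  have hapos : 0 < a := by
    rw [ha]
    rcases lt_or_gt_of_ne hK1 with h | h
    · apply div_pos_of_neg_of_neg <;> nlinarith
    · apply div_pos <;> nlinarith
  have hbpos : 0 < b := by
    rw [hb]
    rcases lt_or_gt_of_ne hK1 with h | h
    · apply div_pos_of_neg_of_neg <;> nlinarith
    · apply div_pos <;> nlinarith
  have hcpos : 0 < c := by
    rw [hc]
    rcases lt_or_gt_of_ne hK1 with h | h
    · apply div_pos_of_neg_of_neg <;> nlinarith
    · apply div_pos <;> nlinarith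
  have hkey0 : (a * c - K * b ^ 2) * (16 * (K - 1) ^ 2) = (1 - K) * (s ^ 2 - (8 * K + 1)) := by
    rw [ha, hb, hc]; field_simp; ring
  have hkey : a * c = K * b ^ 2 := by
    rw [hs2] at hkey0
    have h16 : (16 : ℝ) * (K - 1) ^ 2 ≠ 0 := by positivity
    have := mul_eq_zero.mp (by linarith [hkey0] : (a * c - K * b ^ 2) * (16 * (K - 1) ^ 2) = 0)
    rcases this with h | h
    · linarith
    · exact absurd h h16
  have hrowa : a + b + b = 1 := by rw [ha, hb]; field_simp; ring
  have hrowb : b + c + c = 1 := by rw [hb, hc]; field_simp; ring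
  set x := Real.sqrt (a / K) with hxdef
  set y := Real.sqrt c with hydef
  have hxpos : 0 < x := Real.sqrt_pos.mpr (div_pos hapos hK)
  have hypos : 0 < y := Real.sqrt_pos.mpr hcpos
  have hxx : x * x = a / K := Real.mul_self_sqrt (le_of_lt (div_pos hapos hK))
  have hxx' : x * x * K = a := by rw [hxx]; field_simp
  have hyy : y * y = c := Real.mul_self_sqrt hcpos.le
  have hxy : x * y = b := by
    rw [hxdef, hydef, ← Real.sqrt_mul (le_of_lt (div_pos hapos hK))]
    have h : a / K * c = b ^ 2 := by
      rw [div_mul_eq_mul_div, hkey]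
      field_simp
    rw [h, Real.sqrt_sq hbpos.le]
  refine ⟨x, y, hxpos, hypos, ?_, ?_, ?_, ?_⟩
  · ext i j
    fin_cases i <;> fin_cases j <;>
      simp [Matrix.mul_apply, Fin.sum_univ_three, Matrix.diagonal, Matrix.vecHead, Matrix.vecTail] <;>
      first
        | linear_combination hxx'
        | linear_combination hxy
        | linear_combination hyy
  · intro i j
    fin_cases i <;> fin_cases j <;> simp [Matrix.vecHead, Matrix.vecTail] <;> positivity
  · intro i
    fin_cases i <;> simp [Fin.sum_univ_three, Matrix.vecHead, Matrix.vecTail] <;> linarith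
  · intro j
    fin_cases j <;> simp [Fin.sum_univ_three, Matrix.vecHead, Matrix.vecTail] <;> linarith
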